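/- arXiv:1908.06300 — 6 statements merged into one kernel-verified Lean document; each statement's English description precedes it below -/
import Mathlib

section
/- Let G be a graph in which no connected component is bipartite, and let w : V → ℝ be edge-induced node weights. Then the maximum of w over all 0/1-vectors x with x(v)+x(w) ≤ 1 for all edges vw equals the maximum of w over all integer vectors x with x(v)+x(w) ≤ 1 for all edges vw. -/
open Finset

private lemma round_ineq (a b : ℤ) (h : a + b ≤ 1) :
    a + b ≤ (if 1 ≤ a then (1:ℤ) else 0) + (if 1 ≤ b then (1:ℤ) else 0) := by
  split_ifs <;> omega

/-- If no connected component of `G` is bipartite (i.e. every component contains an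
odd closed walk) and `w` is edge-induced, then the maximum of `w` over 0/1-vectors
satisfying all edge constraints equals the maximum over integer vectors satisfying
all edge constraints. -/
theorem max_over_01_eq_max_over_int {V : Type*} [Fintype V] (G : SimpleGraph V)
    (hnb : ∀ v : V, ∃ u : V, G.Reachable v u ∧ ∃ p : G.Walk u u, Odd p.length)
    (w : V → ℝ)
    (hw : ∃ c : V → V → ℝ, (∀ u v, 0 ≤ c u v) ∧ (∀ u v, c u v = c v u) ∧
      (∀ u v, ¬ G.Adj u v → c u v = 0) ∧ (∀ v, w v = ∑ u, c v u)) :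
    sSup {t : ℝ | ∃ x : V → ℤ, (∀ v, x v = 0 ∨ x v = 1) ∧
        (∀ v u : V, G.Adj v u → x v + x u ≤ 1) ∧ t = ∑ v, w v * (x v : ℝ)}
      =
    sSup {t : ℝ | ∃ x : V → ℤ,
        (∀ v u : V, G.Adj v u → x v + x u ≤ 1) ∧ t = ∑ v, w v * (x v : ℝ)} := by
  classical
  obtain ⟨c, hc0, hcs, hcz, hwc⟩ := hw
  set A := {t : ℝ | ∃ x : V → ℤ, (∀ v, x v = 0 ∨ x v = 1) ∧
      (∀ v u : V, G.Adj v u → x v + x u ≤ 1) ∧ t = ∑ v, w v * (x v : ℝ)} with hA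
  set B := {t : ℝ | ∃ x : V → ℤ,
      (∀ v u : V, G.Adj v u → x v + x u ≤ 1) ∧ t = ∑ v, w v * (x v : ℝ)} with hB
  have hwpos : ∀ v, 0 ≤ w v := fun v => by
    rw [hwc v]; exact Finset.sum_nonneg fun u _ => hc0 v u
  have hAne : A.Nonempty := ⟨0, 0, fun v => Or.inl rfl, fun v u _ => by simp, by simp⟩
  -- key claim: every integer-feasible value is dominated by a 0/1-feasible value
  have claim : ∀ t ∈ B, ∃ s ∈ A, t ≤ s := by
    rintro t ⟨x, hfeas, rfl⟩
    set y : V → ℤ := fun v => if 1 ≤ x v then 1 else 0 with hy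
    have hy01 : ∀ v, y v = 0 ∨ y v = 1 := fun v => by
      simp only [hy]; split_ifs <;> simp
    have hyfeas : ∀ v u : V, G.Adj v u → y v + y u ≤ 1 := by
      intro v u hadj
      have := hfeas v u hadj
      simp only [hy]; split_ifs <;> omega
    refine ⟨∑ v, w v * (y v : ℝ), ⟨y, hy01, hyfeas, rfl⟩, ?_⟩
    have swap : ∀ z : V → ℝ, ∑ v, ∑ u, c v u * z v = ∑ v, ∑ u, c v u * z u := by
      intro z
      rw [Finset.sum_comm]
      exact Finset.sum_congr rfl fun u _ => Finset.sum_congr rfl fun v _ => by rw [hcs]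
    have hterm : ∀ z : V → ℤ, ∑ v, w v * (z v : ℝ) = ∑ v, ∑ u, c v u * (z v : ℝ) := by
      intro z
      refine Finset.sum_congr rfl fun v _ => ?_
      rw [hwc v, Finset.sum_mul]
    have h2 : ∑ v, ∑ u, c v u * ((x v : ℝ) + (x u : ℝ))
        ≤ ∑ v, ∑ u, c v u * ((y v : ℝ) + (y u : ℝ)) := by
      refine Finset.sum_le_sum fun v _ => Finset.sum_le_sum fun u _ => ?_
      by_cases hadj : G.Adj v u
      · refine mul_le_mul_of_nonneg_left ?_ (hc0 v u)
        have hzz : x v + x u ≤ y v + y u := by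
          simp only [hy]; exact round_ineq _ _ (hfeas v u hadj)
        exact_mod_cast hzz
      · simp [hcz v u hadj]
    have e1 : ∀ z : V → ℤ, ∑ v, ∑ u, c v u * ((z v : ℝ) + (z u : ℝ))
        = 2 * ∑ v, ∑ u, c v u * (z v : ℝ) := by
      intro z
      simp only [mul_add, Finset.sum_add_distrib]
      rw [← swap (fun v => (z v : ℝ))]
      ring
    rw [hterm x, hterm y]
    rw [e1 x, e1 y] at h2
    linarith
  have hbound : ∀ t ∈ A, t ≤ ∑ v, w v := by
    rintro t ⟨x, h01, _, rfl⟩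
    refine Finset.sum_le_sum fun v _ => ?_
    rcases h01 v with h | h <;> simp [h, hwpos v]
  have hAbdd : BddAbove A := ⟨∑ v, w v, hbound⟩
  have hBbdd : BddAbove B := ⟨∑ v, w v, fun t ht => by
    obtain ⟨s, hsA, hts⟩ := claim t ht
    exact hts.trans (hbound s hsA)⟩
  have hBne : B.Nonempty := ⟨0, 0, fun v u _ => by simp, by simp⟩
  refine le_antisymm (csSup_le_csSup hBbdd hAne ?_) (csSup_le hBne fun t ht => ?_)
  · rintro t ⟨x, _, hfeas, rfl⟩
    exact ⟨x, hfeas, rfl⟩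
  · obtain ⟨s, hsA, hts⟩ := claim t ht
    exact hts.trans (le_csSup hAbdd hsA)
end

section
/- Let G be a connected non-bipartite graph and let Σ ⊆ E(G) be a set of edges such that every odd closed walk in G traverses an odd number of edges of Σ (counted with multiplicity). Then there exist nodes v₁,…,v_k ∈ V(G) such that the symmetric difference Σ △ δ(v₁) △ ⋯ △ δ(v_k) equals E(G), where δ(v) denotes the set of edges incident to v. -/
open scoped Classical

open SimpleGraph

private noncomputable def sigWgt {V : Type*} (Sig : Set (Sym2 V)) {G : SimpleGraph V} {u v : V}
    (p : G.Walk u v) : ZMod 2 :=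
  (p.length : ZMod 2) + ((p.edges.countP fun e => decide (e ∈ Sig)) : ZMod 2)

private lemma sigWgt_append {V : Type*} (Sig : Set (Sym2 V)) {G : SimpleGraph V} {u v w : V}
    (p : G.Walk u v) (q : G.Walk v w) :
    sigWgt Sig (p.append q) = sigWgt Sig p + sigWgt Sig q := by
  simp only [sigWgt, SimpleGraph.Walk.length_append, SimpleGraph.Walk.edges_append,
    List.countP_append, Nat.cast_add]
  ring

private lemma sigWgt_reverse {V : Type*} (Sig : Set (Sym2 V)) {G : SimpleGraph V} {u v : V}
    (p : G.Walk u v) : sigWgt Sig p.reverse = sigWgt Sig p := by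
  simp [sigWgt, SimpleGraph.Walk.edges_reverse, List.countP_reverse]

private lemma odd_natCast_two {n : ℕ} (h : Odd n) : (n : ZMod 2) = 1 := by
  rw [← ZMod.natCast_mod, Nat.odd_iff.mp h]; rfl

private lemma countP_toList {V : Type*} [DecidableEq V] (s : Finset V) (p : V → Bool) :
    s.toList.countP p = (s.filter (fun v => p v = true)).card := by
  rw [Finset.card, Finset.filter_val, ← Finset.coe_toList s, Multiset.filter_coe,
    Multiset.coe_card, List.countP_eq_length_filter]
  simp

set_option maxHeartbeats 1000000 in
/-- If `G` is connected and non-bipartite and `Sig ⊆ E(G)` is such that every odd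
closed walk traverses an odd number of edges of `Sig``Sig` (with multiplicity), then
some iterated symmetric difference of `Sig``Sig` with stars `δ(v)` equals `E(G)`. -/
theorem signature_switch_to_all_edges {V : Type*} [Fintype V] (G : SimpleGraph V)
    (hconn : G.Connected) (hnb : ∃ (v : V) (p : G.Walk v v), Odd p.length)
    (Sig : Set (Sym2 V)) (hSig : Sig ⊆ G.edgeSet)
    (hodd : ∀ (v : V) (p : G.Walk v v), Odd p.length →
      Odd (p.edges.countP (fun e => decide (e ∈ Sig)))) :
    ∃ l : List V,
      l.foldl (fun S v => symmDiff S {e ∈ G.edgeSet | v ∈ e}) Sig = G.edgeSet := by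
  classical
  obtain ⟨u, q, hq⟩ := hnb
  -- every odd closed walk has weight 0
  have hodd0 : ∀ (v : V) (p : G.Walk v v), Odd p.length → sigWgt Sig p = 0 := by
    intro v p hp
    have hc := hodd v p hp
    rw [sigWgt, odd_natCast_two hp, odd_natCast_two hc]
    decide
  -- every closed walk has weight 0
  have hzero : ∀ (v : V) (p : G.Walk v v), sigWgt Sig p = 0 := by
    intro v p
    rcases Nat.even_or_odd p.length with hp | hp
    · have t : G.Walk v u := (hconn.preconnected v u).some
      set rest : G.Walk v v := t.append (q.append t.reverse) with hrest
      have hrestlen : Odd rest.length := by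
        simp only [hrest, SimpleGraph.Walk.length_append, SimpleGraph.Walk.length_reverse]
        rcases hq with ⟨k, hk⟩
        exact ⟨t.length + k, by omega⟩
      have h1 : sigWgt Sig (p.append rest) = 0 := by
        apply hodd0
        rw [SimpleGraph.Walk.length_append]
        rcases hp with ⟨m, hm⟩
        rcases hrestlen with ⟨k, hk⟩
        exact ⟨m + k, by omega⟩
      have h2 : sigWgt Sig rest = 0 := hodd0 v rest hrestlen
      rw [sigWgt_append, h2, add_zero] at h1
      exact h1
    · exact hodd0 v p hp
  -- well-definedness of potentials
  have hwd : ∀ (x : V) (p1 p2 : G.Walk u x), sigWgt Sig p1 = sigWgt Sig p2 := by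
    intro x p1 p2
    have h := hzero u (p1.append p2.reverse)
    rw [sigWgt_append, sigWgt_reverse] at h
    revert h
    generalize sigWgt Sig p1 = a
    generalize sigWgt Sig p2 = b
    revert a b; decide
  set g : V → ZMod 2 := fun x => sigWgt Sig ((hconn.preconnected u x).some) with hg
  -- potential relation along an edge
  have hadjg : ∀ x y : V, G.Adj x y →
      g y = g x + 1 + (if s(x, y) ∈ Sig then 1 else 0) := by
    intro x y hxy
    have h1 : g y = sigWgt Sig (((hconn.preconnected u x).some).append
        (SimpleGraph.Walk.cons hxy SimpleGraph.Walk.nil)) := hwd y _ _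
    have h2 : sigWgt Sig (SimpleGraph.Walk.cons hxy SimpleGraph.Walk.nil) =
        1 + (if s(x, y) ∈ Sig then 1 else 0) := by
      by_cases hm : s(x, y) ∈ Sig <;> simp [sigWgt, hm]
    rw [h1, sigWgt_append, h2, ← add_assoc]
  -- membership in the fold
  have hfold : ∀ (l : List V) (S : Set (Sym2 V)) (e : Sym2 V),
      e ∈ l.foldl (fun S v => symmDiff S {e ∈ G.edgeSet | v ∈ e}) S ↔
        Xor' (e ∈ S) (Odd (l.countP fun v => decide (e ∈ G.edgeSet ∧ v ∈ e))) := by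
    intro l
    induction l with
    | nil =>
      intro S e
      simp [Xor', Xor, Nat.odd_iff]
    | cons v l ih =>
      intro S e
      rw [List.foldl_cons, ih, List.countP_cons]
      have hmem : e ∈ symmDiff S {e | e ∈ G.edgeSet ∧ v ∈ e} ↔
          (e ∈ S ∧ ¬(e ∈ G.edgeSet ∧ v ∈ e)) ∨ ((e ∈ G.edgeSet ∧ v ∈ e) ∧ e ∉ S) := by
        rw [Set.mem_symmDiff]; simp [Set.mem_setOf_eq]
      by_cases hv : e ∈ G.edgeSet ∧ v ∈ e
      · have hd : (decide (e ∈ G.edgeSet ∧ v ∈ e)) = true := by simp [hv]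
        rw [hd]
        simp only [if_pos rfl, if_true]
        have : e ∈ symmDiff S {e | e ∈ G.edgeSet ∧ v ∈ e} ↔ e ∉ S := by
          rw [hmem]; tauto
        rw [show {e | e ∈ G.edgeSet ∧ v ∈ e} = {e ∈ G.edgeSet | v ∈ e} from rfl] at this
        rw [this, Nat.odd_add_one]
        simp only [Xor', Xor]
        tauto
      · have hd : (decide (e ∈ G.edgeSet ∧ v ∈ e)) = false := by simp [hv]
        rw [hd]
        rw [if_neg Bool.false_ne_true, add_zero]
        have : e ∈ symmDiff S {e | e ∈ G.edgeSet ∧ v ∈ e} ↔ e ∈ S := by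
          rw [hmem]; tauto
        rw [show {e | e ∈ G.edgeSet ∧ v ∈ e} = {e ∈ G.edgeSet | v ∈ e} from rfl] at this
        rw [this]
  refine ⟨(Finset.univ.filter fun v => g v = 1).toList, ?_⟩
  ext e
  rw [hfold]
  induction e using Sym2.ind with
  | _ x y =>
  by_cases he : s(x, y) ∈ G.edgeSet
  · have hxy : G.Adj x y := he
    have hne : x ≠ y := hxy.ne
    -- compute the count
    have hcount : ((Finset.univ.filter fun v => g v = 1).toList.countP
        fun v => decide (s(x, y) ∈ G.edgeSet ∧ v ∈ s(x, y))) =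
        (({x, y} : Finset V).filter fun v => g v = 1).card := by
      rw [countP_toList, Finset.filter_filter]
      congr 1
      ext v
      simp only [Finset.mem_filter, Finset.mem_univ, true_and, Finset.mem_insert,
        Finset.mem_singleton, decide_eq_true_eq, Sym2.mem_iff, he, true_and]
      tauto
    rw [hcount]
    have hrel := hadjg x y hxy
    simp only [he, iff_true]
    by_cases hs : s(x, y) ∈ Sig
    · rw [if_pos hs] at hrel
      have hgeq : g y = g x := by
        revert hrel; generalize g y = a; generalize g x = b; revert a b; decide
      by_cases hgx : g x = 1
      · have : (({x, y} : Finset V).filter fun v => g v = 1) = {x, y} := by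
          apply Finset.filter_true_of_mem
          intro v hv
          rcases Finset.mem_insert.mp hv with rfl | hv
          · exact hgx
          · rw [Finset.mem_singleton.mp hv, hgeq]; exact hgx
        rw [this, Finset.card_insert_of_notMem (by simp [hne]), Finset.card_singleton]
        simp [Xor', Xor, hs, Nat.odd_iff]
      · have : (({x, y} : Finset V).filter fun v => g v = 1) = ∅ := by
          apply Finset.filter_false_of_mem
          intro v hv
          rcases Finset.mem_insert.mp hv with rfl | hv
          · exact hgx
          · rw [Finset.mem_singleton.mp hv, hgeq]; exact hgx
        rw [this, Finset.card_empty]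
        simp [Xor', Xor, hs, Nat.odd_iff]
    · rw [if_neg hs] at hrel
      have hone : (g x = 1 ∧ ¬ g y = 1) ∨ (g y = 1 ∧ ¬ g x = 1) := by
        revert hrel; generalize g y = a; generalize g x = b; revert a b; decide
      have hcard : (({x, y} : Finset V).filter fun v => g v = 1).card = 1 := by
        rcases hone with ⟨h1, h2⟩ | ⟨h1, h2⟩
        · have : (({x, y} : Finset V).filter fun v => g v = 1) = {x} := by
            ext v
            simp only [Finset.mem_filter, Finset.mem_insert, Finset.mem_singleton]
            constructor
            · rintro ⟨rfl | rfl, hv⟩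
              · rfl
              · exact absurd hv h2
            · rintro rfl; exact ⟨Or.inl rfl, h1⟩
          rw [this, Finset.card_singleton]
        · have : (({x, y} : Finset V).filter fun v => g v = 1) = {y} := by
            ext v
            simp only [Finset.mem_filter, Finset.mem_insert, Finset.mem_singleton]
            constructor
            · rintro ⟨rfl | rfl, hv⟩
              · exact absurd hv h2
              · rfl
            · rintro rfl; exact ⟨Or.inr rfl, h1⟩
          rw [this, Finset.card_singleton]
      rw [hcard]
      simp [Xor', Xor, hs, Nat.odd_iff]
  · have hnotsig : s(x, y) ∉ Sig := fun h => he (hSig h)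
    have hcz : ((Finset.univ.filter fun v => g v = 1).toList.countP
        fun v => decide (s(x, y) ∈ G.edgeSet ∧ v ∈ s(x, y))) = 0 := by
      apply List.countP_eq_zero.mpr
      intro v _
      simp [he]
    rw [hcz]
    simp [Xor', Xor, Nat.odd_iff, hnotsig, he]
end

section
/- Let G be a connected non-bipartite graph with edge-node incidence matrix M, and define σ(x) = 1 − Mx for x ∈ ℝ^V. Then the image σ(ℝ^V) equals the set of vectors y ∈ ℝ^E such that for every even closed walk W = (v₀,e₁,…,e_{2k},v_{2k}=v₀) in G, the alternating sum ∑_{i=1}^{2k} (−1)^{i−1} y(e_i) equals 0. -/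
/-- The alternating sum `∑ (−1)^{i−1} y(e_i)` over a list of edges. -/
def altSum {V : Type*} (y : Sym2 V → ℝ) : List (Sym2 V) → ℝ
  | [] => 0
  | e :: l => y e - altSum y l

lemma altSum_append {V : Type*} (y : Sym2 V → ℝ) (l1 l2 : List (Sym2 V)) :
    altSum y (l1 ++ l2) = altSum y l1 + (-1 : ℝ)^l1.length * altSum y l2 := by
  induction l1 with
  | nil => simp [altSum]
  | cons e l ih => simp [altSum, ih, pow_succ]; ring

lemma altSum_reverse {V : Type*} (y : Sym2 V → ℝ) (l : List (Sym2 V)) :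
    altSum y l.reverse = (-1 : ℝ)^(l.length + 1) * altSum y l := by
  induction l with
  | nil => simp [altSum]
  | cons e l ih =>
    simp only [List.reverse_cons, altSum_append, ih, altSum, List.length_reverse,
      List.length_cons, pow_succ]
    ring

lemma altSum_cons {V : Type*} (y : Sym2 V → ℝ) (e : Sym2 V) (l : List (Sym2 V)) :
    altSum y (e :: l) = y e - altSum y l := rfl

noncomputable def cpar (n : ℕ) : ℝ := if Even n then 0 else 1

lemma cpar_succ (n : ℕ) : cpar (n + 1) = 1 - cpar n := by
  rcases Nat.even_or_odd n with h | h
  · simp [cpar, h, Nat.even_add_one, Nat.not_even_iff_odd]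
  · simp [cpar, Nat.even_add_one, Nat.not_even_iff_odd.mpr h, h]

lemma walk_altSum {V : Type*} (G : SimpleGraph V) (y : Sym2 V → ℝ) (x : V → ℝ)
    (h : ∀ v w : V, G.Adj v w → y s(v, w) = 1 - x v - x w) {u v : V} (p : G.Walk u v) :
    altSum y p.edges = cpar p.length - x u + (-1 : ℝ)^p.length * x v := by
  induction p with
  | nil => simp [altSum, cpar]
  | cons hadj q ih =>
    rw [SimpleGraph.Walk.edges_cons, altSum_cons, ih, h _ _ hadj,
      SimpleGraph.Walk.length_cons, cpar_succ, pow_succ]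
    ring

/-- For a connected non-bipartite graph `G`, the image of `σ(x) = 1 − Mx`
(encoded as functions on `Sym2 V` vanishing off `E(G)`) is exactly the set of
vectors whose alternating sum along every even closed walk vanishes. -/
theorem image_sigma_eq_even_walk_kernel {V : Type*} [Fintype V] (G : SimpleGraph V)
    (hconn : G.Connected) (hnb : ∃ (v : V) (p : G.Walk v v), Odd p.length) :
    {y : Sym2 V → ℝ | (∀ e ∉ G.edgeSet, y e = 0) ∧
        ∃ x : V → ℝ, ∀ v w : V, G.Adj v w → y s(v, w) = 1 - x v - x w}
      =
    {y : Sym2 V → ℝ | (∀ e ∉ G.edgeSet, y e = 0) ∧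
        ∀ (v : V) (p : G.Walk v v), Even p.length → altSum y p.edges = 0} := by
  classical
  ext y
  simp only [Set.mem_setOf_eq]
  constructor
  · rintro ⟨h0, x, hx⟩
    refine ⟨h0, fun v p hev => ?_⟩
    rw [walk_altSum G y x hx p, Even.neg_one_pow hev]
    simp [cpar, hev]
  · rintro ⟨h0, hwalk⟩
    refine ⟨h0, ?_⟩
    obtain ⟨v0, W, hW⟩ := hnb
    set A := altSum y W.edges with hA
    set x0 : ℝ := (1 - A) / 2 with hx0
    set F : (u : V) → G.Walk v0 u → ℝ :=
      fun u p => (-1 : ℝ)^p.length * (altSum y p.edges - cpar p.length + x0) with hF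
    have key1 : ∀ (u : V) (p q : G.Walk v0 u), (Even p.length ↔ Even q.length) →
        altSum y p.edges = altSum y q.edges := by
      intro u p q hpar
      have hev : Even (p.append q.reverse).length := by
        rw [SimpleGraph.Walk.length_append, SimpleGraph.Walk.length_reverse, Nat.even_add]
        exact hpar
      have h2 := hwalk v0 (p.append q.reverse) hev
      rw [SimpleGraph.Walk.edges_append, altSum_append, SimpleGraph.Walk.edges_reverse,
        altSum_reverse, SimpleGraph.Walk.length_edges, SimpleGraph.Walk.length_edges] at h2
      rcases Nat.even_or_odd p.length with he | ho
      · have hq := hpar.mp he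
        have : Odd (q.length + 1) := Even.add_one hq
        rw [Even.neg_one_pow he, Odd.neg_one_pow this] at h2
        linarith
      · have hq : Odd q.length := by
          rw [Nat.not_even_iff_odd.symm] at ho ⊢; exact fun h => ho (hpar.mpr h)
        have : Even (q.length + 1) := Odd.add_one hq
        rw [Odd.neg_one_pow ho, Even.neg_one_pow this] at h2
        linarith
    have keyF_same : ∀ (u : V) (p q : G.Walk v0 u), (Even p.length ↔ Even q.length) →
        F u p = F u q := by
      intro u p q hpar
      have h1 := key1 u p q hpar
      rcases Nat.even_or_odd p.length with he | ho
      · have hq := hpar.mp he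
        simp [hF, h1, Even.neg_one_pow he, Even.neg_one_pow hq, cpar, he, hq]
      · have hq : Odd q.length := by
          rw [Nat.not_even_iff_odd.symm] at ho ⊢; exact fun h => ho (hpar.mpr h)
        simp [hF, h1, Odd.neg_one_pow ho, Odd.neg_one_pow hq, cpar,
          Nat.not_even_iff_odd.mpr ho, Nat.not_even_iff_odd.mpr hq]
    have hWnotEven : ¬ Even W.length := Nat.not_even_iff_odd.mpr hW
    have keyFW : ∀ (u : V) (p : G.Walk v0 u), F u (W.append p) = F u p := by
      intro u p
      have hlen : (W.append p).length = W.length + p.length := SimpleGraph.Walk.length_append W p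
      have hedge : altSum y (W.append p).edges = A + (-1 : ℝ)^W.length * altSum y p.edges := by
        rw [SimpleGraph.Walk.edges_append, altSum_append, SimpleGraph.Walk.length_edges, hA]
      have hWodd : ((-1 : ℝ))^W.length = -1 := Odd.neg_one_pow hW
      have hcpar : cpar (W.length + p.length) = 1 - cpar p.length := by
        rcases Nat.even_or_odd p.length with he | ho
        · simp [cpar, he, Nat.even_add, hWnotEven]
        · simp [cpar, Nat.not_even_iff_odd.mpr ho, Nat.even_add, hWnotEven]
      have hsign : ((-1 : ℝ))^(W.length + p.length) = -((-1 : ℝ))^p.length := by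
        rw [pow_add, hWodd]; ring
      simp only [hF, hlen, hedge, hcpar, hsign, hWodd, hx0]
      ring
    have keyF : ∀ (u : V) (p q : G.Walk v0 u), F u p = F u q := by
      intro u p q
      by_cases hpar : Even p.length ↔ Even q.length
      · exact keyF_same u p q hpar
      · have hpar2 : Even p.length ↔ Even (W.append q).length := by
          rw [SimpleGraph.Walk.length_append, Nat.even_add]
          tauto
        calc F u p = F u (W.append q) := keyF_same u p (W.append q) hpar2
          _ = F u q := keyFW u q
    refine ⟨fun u => F u ((hconn.preconnected v0 u).some), ?_⟩
    intro a b hadj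
    set p : G.Walk v0 a := (hconn.preconnected v0 a).some with hp
    show y s(a, b) = 1 - F a p - F b ((hconn.preconnected v0 b).some)
    rw [keyF b ((hconn.preconnected v0 b).some) (p.concat hadj)]
    have hedge : altSum y (p.concat hadj).edges
        = altSum y p.edges + (-1 : ℝ)^p.length * y s(a, b) := by
      rw [SimpleGraph.Walk.edges_concat, List.concat_eq_append, altSum_append,
        SimpleGraph.Walk.length_edges]
      simp [altSum]
    simp only [hF, SimpleGraph.Walk.length_concat, hedge, cpar_succ, pow_succ]
    rcases Nat.even_or_odd p.length with he | ho
    · rw [Even.neg_one_pow he]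
      simp [cpar, he]; ring
    · rw [Odd.neg_one_pow ho]
      simp [cpar, Nat.not_even_iff_odd.mpr ho]; ring
end

section
/- Let G be a graph embedded in a surface with signature Σ ⊆ E(G), let G′ be the double cover of G with respect to Σ, and let X ⊆ V(G). Then X meets all Σ-even odd closed walks of G if and only if X′ := {v¹, v² : v ∈ X} meets all odd cycles of G′. -/
open scoped Classical

/-- The double cover of `G` with respect to a signature `Sig ⊆ E(G)`:
nodes `v¹, v²` (encoded as `V × Bool`), with the two copies of an edge crossing
sides exactly when the edge lies in `Sig`. -/
def doubleCover {V : Type*} (G : SimpleGraph V) (Sig : Set (Sym2 V)) :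
    SimpleGraph (V × Bool) where
  Adj a b := G.Adj a.1 b.1 ∧ (a.2 = b.2 ↔ s(a.1, b.1) ∉ Sig)
  symm := by
    refine ⟨?_⟩
    rintro ⟨u, i⟩ ⟨v, j⟩ ⟨h1, h2⟩
    refine ⟨h1.symm, ?_⟩
    rw [Sym2.eq_swap]
    exact (eq_comm).trans h2
  loopless := by
    refine ⟨?_⟩
    rintro ⟨u, i⟩ ⟨h1, _⟩
    exact G.irrefl h1

/-- Auxiliary: in a path `r : Walk c a` with `c ≠ a`, if the edge `s(a,c)` occurs
in `r` then `r` has length 1. -/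
lemma dcAux_path_loop_edge {W : Type*} {H : SimpleGraph W} :
    ∀ {c a : W} (r : H.Walk c a), r.IsPath → c ≠ a → s(a, c) ∈ r.edges → r.length = 1 := by
  intro c a r
  induction r with
  | nil => simp
  | @cons u d a h' r' ih =>
    intro hp hne hmem
    rw [SimpleGraph.Walk.edges_cons, List.mem_cons] at hmem
    rcases hmem with h1 | h2
    · rw [Sym2.eq_iff] at h1
      rcases h1 with ⟨rfl, rfl⟩ | ⟨rfl, -⟩
      · exact absurd rfl hne
      · have hp' := (SimpleGraph.Walk.cons_isPath_iff _ _).mp hp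
        have : r'.length = 0 := by
          by_contra hlen
          cases r' with
          | nil => simp at hlen
          | cons hadj r'' =>
            have : a ∈ r''.support := SimpleGraph.Walk.end_mem_support r''
            have hnd := hp'.1
            rw [SimpleGraph.Walk.cons_isPath_iff] at hnd
            exact hnd.2 this
        simp [this]
    · exfalso
      have hc : u ∈ r'.support := by
        rw [Sym2.eq_swap] at h2
        exact r'.fst_mem_support_of_mem_edges h2
      have hp' := (SimpleGraph.Walk.cons_isPath_iff _ _).mp hp
      exact hp'.2 hc

lemma dcAux_length_rotate {W : Type*} {H : SimpleGraph W} {a x : W} (q : H.Walk a a)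
    (hx : x ∈ q.support) : (q.rotate x hx).length = q.length := by
  rw [SimpleGraph.Walk.rotate, SimpleGraph.Walk.length_append, Nat.add_comm,
    ← SimpleGraph.Walk.length_append, SimpleGraph.Walk.take_spec]

/-- Auxiliary: every odd closed walk contains an odd cycle on its support. -/
lemma dcAux_exists_odd_cycle {W : Type*} {H : SimpleGraph W} :
    ∀ (n : ℕ) {a : W} (q : H.Walk a a), q.length = n → Odd q.length →
      ∃ (b : W) (c : H.Walk b b), c.IsCycle ∧ Odd c.length ∧ ∀ y ∈ c.support, y ∈ q.support := by
  intro n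
  induction n using Nat.strong_induction_on with
  | _ n ih =>
    intro a q hlen hodd
    by_cases hnd : q.support.tail.Nodup
    · cases q with
      | nil => simp [Nat.odd_iff] at hodd
      | @cons _ c _ h r =>
        rw [SimpleGraph.Walk.support_cons, List.tail_cons] at hnd
        have hpath : r.IsPath := (SimpleGraph.Walk.isPath_def r).mpr hnd
        have hedge : s(a, c) ∉ r.edges := by
          intro hmem
          have := dcAux_path_loop_edge r hpath h.ne' hmem
          rw [SimpleGraph.Walk.length_cons, this] at hodd
          simp [Nat.odd_iff] at hodd
        exact ⟨a, _, (SimpleGraph.Walk.cons_isCycle_iff r h).mpr ⟨hpath, hedge⟩, hodd,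
          fun y hy => hy⟩
    · obtain ⟨x, hx2⟩ := by
        rw [← List.exists_duplicate_iff_not_nodup] at hnd
        exact hnd
      have hxcount : 2 ≤ q.support.tail.count x := List.duplicate_iff_two_le_count.mp hx2
      have hxmem : x ∈ q.support := List.mem_of_mem_tail (List.Duplicate.mem hx2)
      have hrot := SimpleGraph.Walk.support_rotate q x hxmem
      have hrlen := dcAux_length_rotate q hxmem
      have hsub : ∀ y ∈ (q.rotate x hxmem).support, y ∈ q.support := by
        intro y hy
        rcases (SimpleGraph.Walk.support_eq_cons (q.rotate x hxmem)) ▸ hy with hy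
        rw [List.mem_cons] at hy
        rcases hy with rfl | hy
        · exact hxmem
        · exact List.mem_of_mem_tail (hrot.mem_iff.mp hy)
      have hrcount : 2 ≤ (q.rotate x hxmem).support.tail.count x := by
        rw [hrot.perm.count_eq]; exact hxcount
      set q' := q.rotate x hxmem with hq'
      clear_value q'
      cases q' with
      | nil => rw [← hrlen, SimpleGraph.Walk.length_nil] at hlen; subst hlen;
               simp [← hrlen, Nat.odd_iff] at hodd
      | @cons _ c _ h r =>
        rw [SimpleGraph.Walk.support_cons, List.tail_cons] at hrcount
        have hxr : x ∈ r.support := by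
          have : 0 < r.support.count x := by omega
          exact List.count_pos_iff.mp this
        set t := r.takeUntil x hxr with ht
        set d := r.dropUntil x hxr with hd
        have hts : t.append d = r := SimpleGraph.Walk.take_spec r hxr
        have htc : t.support.count x = 1 := SimpleGraph.Walk.count_support_takeUntil_eq_one r hxr
        have hsupp : r.support = t.support ++ d.support.tail := by
          rw [← hts, SimpleGraph.Walk.support_append]
        have hdc : 1 ≤ d.support.tail.count x := by
          rw [hsupp, List.count_append] at hrcount; omega
        have hdlen : 0 < d.length := by
          have hne : d.support.tail ≠ [] := by
            intro he; rw [he] at hdc; simp at hdc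
          have := SimpleGraph.Walk.length_support d
          have h2 := List.length_tail (l := d.support)
          have : 0 < d.support.tail.length := List.length_pos_iff.mpr hne
          omega
        have hlensum : 1 + t.length + d.length = n := by
          have := congr_arg SimpleGraph.Walk.length hts
          rw [SimpleGraph.Walk.length_append] at this
          rw [← hlen, ← hrlen, SimpleGraph.Walk.length_cons]
          omega
        have hsub1 : ∀ y ∈ (SimpleGraph.Walk.cons h t).support, y ∈ q.support := by
          intro y hy
          rw [SimpleGraph.Walk.support_cons, List.mem_cons] at hy
          rcases hy with rfl | hy
          · exact hsub _ (SimpleGraph.Walk.start_mem_support _)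
          · exact hsub _ (by
              rw [SimpleGraph.Walk.support_cons, List.mem_cons]
              exact Or.inr (SimpleGraph.Walk.support_takeUntil_subset r hxr hy))
        have hsub2 : ∀ y ∈ d.support, y ∈ q.support := by
          intro y hy
          exact hsub _ (by
            rw [SimpleGraph.Walk.support_cons, List.mem_cons]
            exact Or.inr (SimpleGraph.Walk.support_dropUntil_subset r hxr hy))
        rw [Nat.odd_iff] at hodd
        rw [hlen] at hodd
        rcases Nat.even_or_odd (1 + t.length) with he | ho
        · have hdodd : Odd d.length := by
            rw [Nat.even_iff] at he; rw [Nat.odd_iff]; omega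
          obtain ⟨b, cyc, h1, h2, h3⟩ := ih d.length (by omega) d rfl hdodd
          exact ⟨b, cyc, h1, h2, fun y hy => hsub2 y (h3 y hy)⟩
        · have hcodd : Odd (SimpleGraph.Walk.cons h t).length := by
            rw [SimpleGraph.Walk.length_cons, Nat.odd_iff]
            rw [Nat.odd_iff] at ho; omega
          obtain ⟨b, cyc, h1, h2, h3⟩ := ih (SimpleGraph.Walk.cons h t).length
            (by rw [SimpleGraph.Walk.length_cons]; omega) (SimpleGraph.Walk.cons h t) rfl hcodd
          exact ⟨b, cyc, h1, h2, fun y hy => hsub1 y (h3 y hy)⟩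

/-- Projection homomorphism from the double cover to `G`. -/
def dcProj {V : Type*} (G : SimpleGraph V) (Sig : Set (Sym2 V)) :
    doubleCover G Sig →g G := ⟨Prod.fst, fun h => h.1⟩

lemma dc_parity {V : Type*} (G : SimpleGraph V) (Sig : Set (Sym2 V)) :
    ∀ {a b : V × Bool} (q : (doubleCover G Sig).Walk a b),
    (Even (((q.map (dcProj G Sig)).edges).countP (fun e => decide (e ∈ Sig))) ↔ a.2 = b.2) := by
  intro a b q
  induction q with
  | nil => simp
  | @cons a c b h q ih =>
    rw [SimpleGraph.Walk.map_cons, SimpleGraph.Walk.edges_cons, List.countP_cons]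
    have hedge : s((dcProj G Sig) a, (dcProj G Sig) c) = s(a.1, c.1) := rfl
    rw [hedge]
    have hadj := h.2
    by_cases hmem : s(a.1, c.1) ∈ Sig
    · have h2 : a.2 ≠ c.2 := fun he => (hadj.mp he) hmem
      simp only [hmem, decide_true, if_true, Nat.even_add_one, ih]
      revert h2 ih
      cases a.2 <;> cases c.2 <;> cases b.2 <;> simp
    · have h2 : a.2 = c.2 := hadj.mpr hmem
      simp only [hmem, decide_false, Bool.false_eq_true, if_false, Nat.add_zero, ih, h2]

/-- Lift of a walk in `G` to the double cover, starting on side `i`. -/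
noncomputable def dcLift {V : Type*} (G : SimpleGraph V) (Sig : Set (Sym2 V)) :
    ∀ {u v : V} (p : G.Walk u v) (i : Bool),
    Σ' j : Bool, (doubleCover G Sig).Walk (u, i) (v, j)
  | _, _, SimpleGraph.Walk.nil, i => ⟨i, SimpleGraph.Walk.nil⟩
  | _, _, @SimpleGraph.Walk.cons _ _ u w v h p, i =>
    let j : Bool := if s(u, w) ∈ Sig then !i else i
    let l := dcLift G Sig p j
    ⟨l.1, SimpleGraph.Walk.cons (by
      refine ⟨h, ?_⟩
      by_cases hm : s(u, w) ∈ Sig <;> simp [j, hm]) l.2⟩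

lemma dcLift_map {V : Type*} (G : SimpleGraph V) (Sig : Set (Sym2 V)) :
    ∀ {u v : V} (p : G.Walk u v) (i : Bool),
    ((dcLift G Sig p i).2.map (dcProj G Sig)) = p := by
  intro u v p
  induction p with
  | nil => intro i; rfl
  | cons h p ih =>
    intro i
    rw [dcLift]
    erw [SimpleGraph.Walk.map_cons]
    rw [ih]
    rfl

/-- A set `X` of nodes meets all `Sig`-even odd closed walks of `G` iff
`X' = {v¹, v² : v ∈ X}` meets all odd cycles of the double cover. -/
theorem transversal_iff_double_cover {V : Type*} (G : SimpleGraph V)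
    (Sig : Set (Sym2 V)) (hSig : Sig ⊆ G.edgeSet) (X : Set V) :
    (∀ (v : V) (p : G.Walk v v), Odd p.length →
        Even (p.edges.countP (fun e => decide (e ∈ Sig))) →
        ∃ u ∈ p.support, u ∈ X)
      ↔
    (∀ (a : V × Bool) (q : (doubleCover G Sig).Walk a a), q.IsCycle →
        Odd q.length → ∃ b ∈ q.support, b.1 ∈ X) := by
  constructor
  · intro h a q hcyc hodd
    have heven : Even (((q.map (dcProj G Sig)).edges).countP (fun e => decide (e ∈ Sig))) :=
      (dc_parity G Sig q).mpr rfl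
    obtain ⟨u, hu, huX⟩ := h a.1 (q.map (dcProj G Sig))
      (by erw [SimpleGraph.Walk.length_map]; exact hodd) heven
    erw [SimpleGraph.Walk.support_map, List.mem_map] at hu
    obtain ⟨b, hb, rfl⟩ := hu
    exact ⟨b, hb, huX⟩
  · intro h v p hodd heven
    have hmap := dcLift_map G Sig p false
    have hj : (false : Bool) = (dcLift G Sig p false).1 := by
      have hpar := dc_parity G Sig (dcLift G Sig p false).2
      rw [hmap] at hpar
      exact hpar.mp heven
    set q0 := (dcLift G Sig p false).2 with hq0
    have hlen : q0.length = p.length := by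
      have := congr_arg SimpleGraph.Walk.length hmap
      rwa [SimpleGraph.Walk.length_map] at this
    set q : (doubleCover G Sig).Walk (v, false) (v, false) :=
      q0.copy rfl (by rw [← hj]) with hq
    have hqlen : q.length = p.length := by
      rw [hq, SimpleGraph.Walk.length_copy, hlen]
    obtain ⟨b, cyc, hcyc, hcodd, hsub⟩ :=
      dcAux_exists_odd_cycle q.length q rfl (by rwa [hqlen])
    obtain ⟨b', hb', hX⟩ := h b cyc hcyc hcodd
    refine ⟨b'.1, ?_, hX⟩
    have hbq : b' ∈ q0.support := by
      have := hsub b' hb'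
      rwa [hq, SimpleGraph.Walk.support_copy] at this
    have : b'.1 ∈ (q0.map (dcProj G Sig)).support := by
      rw [SimpleGraph.Walk.support_map]
      exact List.mem_map_of_mem hbq
    rwa [hmap] at this
end

section
/- For any finite collection of polyhedra P₁, …, P_t in ℝⁿ with identical recession cones, the convex hull of their union P = conv(P₁ ∪ ⋯ ∪ P_t) is a polyhedron satisfying xc(P) ≤ ∑_{i=1}^t xc(P_i) + t, where xc denotes the minimum number of inequalities in an extended formulation. -/
open Finset

/-- `P` admits an extended formulation with `m` inequalities. -/
def IsEF {n : ℕ} (P : Set (Fin n → ℝ)) (m : ℕ) : Prop :=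
  ∃ (k : ℕ) (A : Matrix (Fin m) (Fin n) ℝ) (B : Matrix (Fin m) (Fin k) ℝ)
    (b : Fin m → ℝ),
    P = {x | ∃ y : Fin k → ℝ, ∀ i, A.mulVec x i + B.mulVec y i ≤ b i}

/-- The extension complexity of `P`: the minimum number of inequalities in an
extended formulation of `P`. -/
noncomputable def xc {n : ℕ} (P : Set (Fin n → ℝ)) : ℕ := sInf {m | IsEF P m}

/-- `P` is a polyhedron. -/
def IsPolyhedron {n : ℕ} (P : Set (Fin n → ℝ)) : Prop :=
  ∃ (m : ℕ) (A : Matrix (Fin m) (Fin n) ℝ) (b : Fin m → ℝ),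
    P = {x | ∀ i, A.mulVec x i ≤ b i}

/-- The recession cone of `P`. -/
def recCone {n : ℕ} (P : Set (Fin n → ℝ)) : Set (Fin n → ℝ) :=
  {r | ∀ x ∈ P, ∀ l : ℝ, 0 ≤ l → x + l • r ∈ P}


/-- A linear functional on a finite pi type is determined by its values on basis vectors. -/
lemma linfun_eq_sum {α : Type} [Fintype α] [DecidableEq α] (f : (α → ℝ) →ₗ[ℝ] ℝ) (x : α → ℝ) :
    f x = ∑ j, x j * f (Pi.single j 1) := by
  rw [LinearMap.pi_apply_eq_sum_univ]
  refine Finset.sum_congr rfl fun j _ => ?_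
  rw [smul_eq_mul]
  congr 2
  funext j'
  simp [Pi.single_apply, eq_comm]

/-- One step of Fourier–Motzkin elimination, coordinate-free form. -/
theorem fm_one {V : Type} [AddCommGroup V] [Module ℝ V] {ι : Type} [Fintype ι]
    (f : ι → V →ₗ[ℝ] ℝ) (c : ι → ℝ) (b : ι → ℝ) :
    ∃ (ι' : Type) (_ : Fintype ι') (f' : ι' → V →ₗ[ℝ] ℝ) (b' : ι' → ℝ),
      ∀ x : V, (∃ s : ℝ, ∀ i, f i x + c i * s ≤ b i) ↔ (∀ i', f' i' x ≤ b' i') := by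
  classical
  refine ⟨ι ⊕ ι × ι, inferInstance,
    Sum.elim (fun i => if c i = 0 then f i else 0)
      (fun p => if 0 < c p.1 ∧ c p.2 < 0 then (-(c p.2)) • f p.1 + c p.1 • f p.2 else 0),
    Sum.elim (fun i => if c i = 0 then b i else 0)
      (fun p => if 0 < c p.1 ∧ c p.2 < 0 then (-(c p.2)) * b p.1 + c p.1 * b p.2 else 0),
    fun x => ?_⟩
  constructor
  · rintro ⟨s, hs⟩ (i | ⟨i, j⟩)
    · by_cases h : c i = 0 <;> simp [h]
      have := hs i; rw [h] at this; linarith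
    · by_cases h : 0 < c i ∧ c j < 0 <;> simp [h]
      have h1 := hs i; have h2 := hs j
      nlinarith [h.1, h.2]
  · intro h
    set u : ι → ℝ := fun i => (b i - f i x) / c i with hu
    have ha : ∀ i, c i = 0 → f i x ≤ b i := by
      intro i hi; have := h (Sum.inl i); simpa [hi] using this
    have hb : ∀ i j, 0 < c i → c j < 0 →
        (-(c j)) * f i x + c i * f j x ≤ (-(c j)) * b i + c i * b j := by
      intro i j hi hj; have := h (Sum.inr (i, j))
      simpa [hi, hj, not_lt.2 hj.le] using this
    have hc : ∀ i j, 0 < c i → c j < 0 → u j ≤ u i := by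
      intro i j hi hj
      have e1 : c i * u i = b i - f i x := by
        simp only [hu]; rw [mul_comm, div_mul_cancel₀ _ (ne_of_gt hi)]
      have e2 : c j * u j = b j - f j x := by
        simp only [hu]; rw [mul_comm, div_mul_cancel₀ _ (ne_of_lt hj)]
      have hbb := hb i j hi hj
      nlinarith [mul_pos hi (neg_pos.2 hj)]
    set U : Finset ι := univ.filter (fun i => 0 < c i) with hU
    set L : Finset ι := univ.filter (fun i => c i < 0) with hL
    set s : ℝ := if hUn : U.Nonempty then U.inf' hUn u
      else if hLn : L.Nonempty then L.sup' hLn u else 0 with hs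
    refine ⟨s, fun i => ?_⟩
    rcases lt_trichotomy (c i) 0 with hci | hci | hci
    · -- c i < 0 : need u i ≤ s
      have hiL : i ∈ L := by simp [hL, hci]
      have hle : u i ≤ s := by
        by_cases hUn : U.Nonempty
        · rw [hs, dif_pos hUn]
          refine Finset.le_inf' hUn u fun j hj => ?_
          have hcj : 0 < c j := by simpa [hU] using hj
          exact hc j i hcj hci
        · have hLn : L.Nonempty := ⟨i, hiL⟩
          rw [hs, dif_neg hUn, dif_pos hLn]
          exact Finset.le_sup' u hiL
      have e2 : c i * u i = b i - f i x := by
        simp only [hu]; rw [mul_comm, div_mul_cancel₀ _ (ne_of_lt hci)]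
      nlinarith
    · have := ha i hci; rw [hci]; linarith
    · -- 0 < c i : need s ≤ u i
      have hiU : i ∈ U := by simp [hU, hci]
      have hUn : U.Nonempty := ⟨i, hiU⟩
      have hle : s ≤ u i := by
        rw [hs, dif_pos hUn]; exact Finset.inf'_le u hiU
      have e1 : c i * u i = b i - f i x := by
        simp only [hu]; rw [mul_comm, div_mul_cancel₀ _ (ne_of_gt hci)]
      nlinarith


theorem elim_vars (N : ℕ) : ∀ {V : Type} [AddCommGroup V] [Module ℝ V]
    (κ : Type) [Fintype κ], Fintype.card κ = N →
    ∀ {ι : Type} [Fintype ι] (f : ι → V →ₗ[ℝ] ℝ) (g : ι → (κ → ℝ) →ₗ[ℝ] ℝ) (b : ι → ℝ),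
    ∃ (ι' : Type) (_ : Fintype ι') (f' : ι' → V →ₗ[ℝ] ℝ) (b' : ι' → ℝ),
      {x : V | ∃ y : κ → ℝ, ∀ i, f i x + g i y ≤ b i} = {x | ∀ i', f' i' x ≤ b' i'} := by
  induction N with
  | zero =>
    intro V _ _ κ _ hcard ι _ f g b
    have : IsEmpty κ := Fintype.card_eq_zero_iff.mp hcard
    refine ⟨ι, inferInstance, f, b, ?_⟩
    ext x
    simp only [Set.mem_setOf_eq]
    constructor
    · rintro ⟨y, hy⟩ i
      have hy0 : y = 0 := funext fun j => isEmptyElim j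
      have := hy i
      rw [hy0, map_zero] at this
      linarith
    · intro h
      exact ⟨0, fun i => by rw [map_zero]; linarith [h i]⟩
  | succ N IH =>
    intro V _ _ κ _ hcard ι _ f g b
    classical
    have hne : Nonempty κ := Fintype.card_pos_iff.mp (by omega)
    obtain ⟨j₀⟩ := hne
    have hcard' : Fintype.card {j : κ // ¬ (j = j₀)} = N := by
      have h1 : Fintype.card {j : κ // j = j₀} = 1 := Fintype.card_subtype_eq j₀
      have h2 := Fintype.card_subtype_compl (fun j : κ => j = j₀)
      omega
    set e1 : κ → ℝ := Pi.single j₀ (1 : ℝ) with he1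
    -- the extension-by-zero linear map
    set ext : ({j : κ // ¬ (j = j₀)} → ℝ) →ₗ[ℝ] (κ → ℝ) :=
      { toFun := fun y' j => if h : j = j₀ then 0 else y' ⟨j, h⟩
        map_add' := by intro a c; funext j; by_cases h : j = j₀ <;> simp [h]
        map_smul' := by intro r a; funext j; by_cases h : j = j₀ <;> simp [h] } with hext
    have hdecomp : ∀ y : κ → ℝ, y = ext (fun j' => y j'.1) + y j₀ • e1 := by
      intro y; funext j
      by_cases h : j = j₀ <;> simp [hext, he1, h, Pi.single_apply]
    -- step 1: peel off the coordinate j₀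
    have step1 : {x : V | ∃ y : κ → ℝ, ∀ i, f i x + g i y ≤ b i}
        = {x : V | ∃ (y' : {j : κ // ¬ (j = j₀)} → ℝ) (s : ℝ), ∀ i,
            (f i x + g i (ext y')) + (g i e1) * s ≤ b i} := by
      ext x
      simp only [Set.mem_setOf_eq]
      constructor
      · rintro ⟨y, hy⟩
        refine ⟨fun j' => y j'.1, y j₀, fun i => ?_⟩
        have h2 := hy i
        rw [hdecomp y, map_add, map_smul, smul_eq_mul] at h2
        linarith
      · rintro ⟨y', s, hy⟩
        refine ⟨ext y' + s • e1, fun i => ?_⟩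
        rw [map_add, map_smul, smul_eq_mul]
        linarith [hy i]
    -- step 2: apply fm_one on V × (κ' → ℝ)
    obtain ⟨ι'', _, f'', b'', hfm⟩ := fm_one (V := V × ({j : κ // ¬ (j = j₀)} → ℝ))
      (fun i => f i ∘ₗ LinearMap.fst ℝ V _ + g i ∘ₗ ext ∘ₗ LinearMap.snd ℝ V _)
      (fun i => g i e1) b
    have step2 : {x : V | ∃ y : κ → ℝ, ∀ i, f i x + g i y ≤ b i}
        = {x : V | ∃ y' : {j : κ // ¬ (j = j₀)} → ℝ, ∀ i'',
            (f'' i'' ∘ₗ LinearMap.inl ℝ V _) x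
              + (f'' i'' ∘ₗ LinearMap.inr ℝ V _) y' ≤ b'' i''} := by
      rw [step1]
      ext x
      simp only [Set.mem_setOf_eq]
      constructor
      · rintro ⟨y', s, hy⟩
        refine ⟨y', fun i'' => ?_⟩
        have h3 := (hfm (x, y')).mp ⟨s, fun i => by simpa using hy i⟩ i''
        have hxy : ((x, y') : V × ({j : κ // ¬ (j = j₀)} → ℝ)) = (x, 0) + (0, y') := by simp
        rw [hxy, map_add] at h3
        simpa using h3
      · rintro ⟨y', hy⟩
        obtain ⟨s, hs⟩ := (hfm (x, y')).mpr (by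
          intro i''
          have h4 := hy i''
          have hxy : ((x, y') : V × ({j : κ // ¬ (j = j₀)} → ℝ)) = (x, 0) + (0, y') := by simp
          rw [hxy, map_add]
          simpa using h4)
        exact ⟨y', s, fun i => by simpa using hs i⟩
    rw [step2]
    exact IH _ hcard' _ _ b''

theorem isPolyhedron_of_rows {n : ℕ} {ι : Type} [Fintype ι]
    (f : ι → (Fin n → ℝ) →ₗ[ℝ] ℝ) (b : ι → ℝ) :
    IsPolyhedron {x | ∀ i, f i x ≤ b i} := by
  classical
  set e := Fintype.equivFin ι with he
  refine ⟨Fintype.card ι, fun r j => f (e.symm r) (Pi.single j 1), fun r => b (e.symm r), ?_⟩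
  ext x
  simp only [Set.mem_setOf_eq]
  have key : ∀ r, (Matrix.mulVec (fun r j => f (e.symm r) (Pi.single j 1)) x) r
      = f (e.symm r) x := by
    intro r
    rw [linfun_eq_sum (f (e.symm r)) x]
    simp [Matrix.mulVec, dotProduct, mul_comm]
  constructor
  · intro h r; rw [key]; exact h _
  · intro h i
    have := h (e i)
    rwa [key, Equiv.symm_apply_apply] at this

theorem isEF_of_rows {n : ℕ} {ι κ : Type} [Fintype ι] [Fintype κ]
    (f : ι → (Fin n → ℝ) →ₗ[ℝ] ℝ) (g : ι → (κ → ℝ) →ₗ[ℝ] ℝ) (b : ι → ℝ) :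
    IsEF {x | ∃ y : κ → ℝ, ∀ i, f i x + g i y ≤ b i} (Fintype.card ι) := by
  classical
  set e := Fintype.equivFin ι with he
  set e' := Fintype.equivFin κ with he'
  refine ⟨Fintype.card κ, fun r j => f (e.symm r) (Pi.single j 1),
    fun r j' => g (e.symm r) (Pi.single (e'.symm j') 1), fun r => b (e.symm r), ?_⟩
  ext x
  simp only [Set.mem_setOf_eq]
  have keyA : ∀ r, (Matrix.mulVec (fun r j => f (e.symm r) (Pi.single j 1)) x) r
      = f (e.symm r) x := by
    intro r
    rw [linfun_eq_sum (f (e.symm r)) x]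
    simp [Matrix.mulVec, dotProduct, mul_comm]
  have keyB : ∀ (z : κ → ℝ) r,
      (Matrix.mulVec (fun r j' => g (e.symm r) (Pi.single (e'.symm j') 1)) (z ∘ e'.symm)) r
      = g (e.symm r) z := by
    intro z r
    rw [linfun_eq_sum (g (e.symm r)) z]
    simp only [Matrix.mulVec, dotProduct]
    rw [← Equiv.sum_comp e'.symm (fun c => z c * g (e.symm r) (Pi.single c 1))]
    simp [mul_comm]
  constructor
  · rintro ⟨z, hz⟩
    refine ⟨z ∘ e'.symm, fun r => ?_⟩
    rw [keyA, keyB]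
    exact hz _
  · rintro ⟨y, hy⟩
    refine ⟨y ∘ e', fun i => ?_⟩
    have hyz : y = (y ∘ e') ∘ e'.symm := by funext j'; simp
    have := hy (e i)
    rw [keyA] at this
    rw [hyz] at this
    rw [keyB (y ∘ e'), Equiv.symm_apply_apply] at this
    exact this

theorem isEF_of_isPolyhedron {n : ℕ} {P : Set (Fin n → ℝ)} (h : IsPolyhedron P) :
    ∃ m, IsEF P m := by
  obtain ⟨m, A, b, hP⟩ := h
  refine ⟨m, m, A, 0, b, ?_⟩
  rw [hP]
  ext x
  simp only [Set.mem_setOf_eq]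
  constructor
  · intro h2
    exact ⟨0, fun i => by simpa using h2 i⟩
  · rintro ⟨y, hy⟩ i
    simpa using hy i

theorem isPolyhedron_of_isEF {n m : ℕ} {P : Set (Fin n → ℝ)} (h : IsEF P m) :
    IsPolyhedron P := by
  obtain ⟨k, A, B, b, rfl⟩ := h
  obtain ⟨ι', _, f', b', heq⟩ := elim_vars (Fintype.card (Fin k)) (Fin k) rfl
    (fun i => LinearMap.proj i ∘ₗ A.mulVecLin) (fun i => LinearMap.proj i ∘ₗ B.mulVecLin) b
  have hset : {x : Fin n → ℝ | ∃ y : Fin k → ℝ, ∀ i, A.mulVec x i + B.mulVec y i ≤ b i}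
      = {x : Fin n → ℝ | ∃ y : Fin k → ℝ, ∀ i,
          (LinearMap.proj i ∘ₗ A.mulVecLin) x + (LinearMap.proj i ∘ₗ B.mulVecLin) y ≤ b i} := by
    rfl
  rw [hset, heq]
  exact isPolyhedron_of_rows f' b'

theorem xc_le_of_isEF {n : ℕ} {P : Set (Fin n → ℝ)} {m : ℕ} (h : IsEF P m) : xc P ≤ m :=
  Nat.sInf_le h

theorem isEF_xc {n : ℕ} {P : Set (Fin n → ℝ)} (h : IsPolyhedron P) : IsEF P (xc P) :=
  Nat.sInf_mem (isEF_of_isPolyhedron h)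


theorem recCone_zero {n : ℕ} (P : Set (Fin n → ℝ)) : (0 : Fin n → ℝ) ∈ recCone P := by
  intro x hx l hl; simpa using hx

theorem recCone_add {n : ℕ} (P : Set (Fin n → ℝ)) {r₁ r₂ : Fin n → ℝ}
    (h₁ : r₁ ∈ recCone P) (h₂ : r₂ ∈ recCone P) : r₁ + r₂ ∈ recCone P := by
  intro x hx l hl
  have hstep := h₂ _ (h₁ x hx l hl) l hl
  convert hstep using 1
  rw [smul_add]; abel

theorem balas_core {n t : ℕ} (P : Fin t → Set (Fin n → ℝ))
    (m k : Fin t → ℕ) (A : ∀ i, Matrix (Fin (m i)) (Fin n) ℝ)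
    (B : ∀ i, Matrix (Fin (m i)) (Fin (k i)) ℝ) (b : ∀ i, Fin (m i) → ℝ)
    (hP : ∀ i, P i = {x | ∃ y : Fin (k i) → ℝ, ∀ j, (A i).mulVec x j + (B i).mulVec y j ≤ b i j})
    (hrec : ∀ i j, recCone (P i) = recCone (P j)) :
    convexHull ℝ (⋃ i, P i) =
      {x | ∃ (χ : Fin t → Fin n → ℝ) (υ : ∀ i, Fin (k i) → ℝ) (lam : Fin t → ℝ),
        (∀ i, 0 ≤ lam i) ∧ ∑ i, lam i = 1 ∧ x = ∑ i, χ i ∧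
        ∀ i j, (A i).mulVec (χ i) j + (B i).mulVec (υ i) j ≤ lam i * b i j} := by
  classical
  apply Set.Subset.antisymm
  · -- conv ⊆ Q
    apply convexHull_min
    · -- each P i₁ ⊆ Q
      rintro x hx
      rw [Set.mem_iUnion] at hx
      obtain ⟨i₁, hx⟩ := hx
      rw [hP i₁] at hx
      obtain ⟨y, hy⟩ := hx
      refine ⟨Function.update (fun _ => 0) i₁ x, Function.update (fun i => 0) i₁ y,
        fun i => if i = i₁ then 1 else 0, fun i => by positivity, by simp, ?_, ?_⟩
      · rw [Finset.sum_update_of_mem (Finset.mem_univ i₁)]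
        simp
      · intro i j
        by_cases h : i = i₁
        · subst h
          simpa using hy j
        · simp [Function.update_of_ne h, Matrix.mulVec_zero, h]
    · -- Q is convex
      rintro x ⟨χ, υ, lam, hnn, hs1, hxs, hcon⟩ x' ⟨χ', υ', lam', hnn', hs1', hxs', hcon'⟩
        a c ha hc hac
      refine ⟨fun i => a • χ i + c • χ' i, fun i => a • υ i + c • υ' i,
        fun i => a * lam i + c * lam' i,
        fun i => add_nonneg (mul_nonneg ha (hnn i)) (mul_nonneg hc (hnn' i)), ?_, ?_, ?_⟩
      · rw [Finset.sum_add_distrib, ← Finset.mul_sum, ← Finset.mul_sum, hs1, hs1']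
        linarith
      · rw [hxs, hxs', Finset.smul_sum, Finset.smul_sum, ← Finset.sum_add_distrib]
      · intro i j
        have h1 := hcon i j
        have h2 := hcon' i j
        rw [Matrix.mulVec_add, Matrix.mulVec_add, Matrix.mulVec_smul, Matrix.mulVec_smul,
          Matrix.mulVec_smul, Matrix.mulVec_smul]
        simp only [Pi.add_apply, Pi.smul_apply, smul_eq_mul]
        nlinarith
  · -- Q ⊆ conv
    rintro x ⟨χ, υ, lam, hnn, hs1, hxs, hcon⟩
    have hex : ∃ i₀, 0 < lam i₀ := by
      by_contra hno
      push_neg at hno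
      have : ∀ i, lam i = 0 := fun i => le_antisymm (hno i) (hnn i)
      rw [Finset.sum_congr rfl (fun i _ => this i)] at hs1
      simp at hs1
    obtain ⟨i₀, hi₀⟩ := hex
    set S : Finset (Fin t) := Finset.univ.filter (fun i => 0 < lam i) with hS
    have hi₀S : i₀ ∈ S := by simp [hS, hi₀]
    -- scaled points are in P i
    have hz : ∀ i ∈ S, (lam i)⁻¹ • χ i ∈ P i := by
      intro i hi
      have hli : 0 < lam i := by simpa [hS] using hi
      rw [hP i]
      refine ⟨(lam i)⁻¹ • υ i, fun j => ?_⟩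
      rw [Matrix.mulVec_smul, Matrix.mulVec_smul]
      simp only [Pi.smul_apply, smul_eq_mul]
      have := hcon i j
      calc (lam i)⁻¹ * (A i).mulVec (χ i) j + (lam i)⁻¹ * (B i).mulVec (υ i) j
          = (lam i)⁻¹ * ((A i).mulVec (χ i) j + (B i).mulVec (υ i) j) := by ring
        _ ≤ (lam i)⁻¹ * (lam i * b i j) := by
            apply mul_le_mul_of_nonneg_left this (by positivity)
        _ = b i j := by field_simp
    -- leftover directions are recession directions
    have hrecmem : ∀ i, i ∉ S → χ i ∈ recCone (P i₀) := by
      intro i hi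
      have hli : lam i = 0 := by
        by_contra hne
        exact hi (by simp [hS, lt_of_le_of_ne (hnn i) (Ne.symm hne)])
      rw [← hrec i i₀]
      intro x₀ hx₀ l hl
      rw [hP i] at hx₀ ⊢
      obtain ⟨y₀, hy₀⟩ := hx₀
      refine ⟨y₀ + l • υ i, fun j => ?_⟩
      rw [Matrix.mulVec_add, Matrix.mulVec_add, Matrix.mulVec_smul, Matrix.mulVec_smul]
      simp only [Pi.add_apply, Pi.smul_apply, smul_eq_mul]
      have h1 := hy₀ j
      have h2 := hcon i j
      rw [hli, zero_mul] at h2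
      nlinarith
    set r : Fin n → ℝ := ∑ i ∈ Finset.univ \ S, χ i with hr
    have hrrec : r ∈ recCone (P i₀) := by
      rw [hr]
      apply Finset.sum_induction _ _ (fun a c => recCone_add (P i₀)) (recCone_zero (P i₀))
      intro i hi
      exact hrecmem i (by simpa using (Finset.mem_sdiff.mp hi).2)
    -- the points
    set p : Fin t → (Fin n → ℝ) :=
      fun i => if i = i₀ then (lam i₀)⁻¹ • χ i₀ + (lam i₀)⁻¹ • r else (lam i)⁻¹ • χ i with hp
    have hpmem : ∀ i ∈ S, p i ∈ ⋃ i, P i := by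
      intro i hi
      rw [Set.mem_iUnion]
      refine ⟨i, ?_⟩
      simp only [hp]
      by_cases h : i = i₀
      · subst h
        simp only [if_pos rfl]
        exact hrrec _ (hz i hi) _ (by positivity)
      · rw [if_neg h]
        exact hz i hi
    have hsum : ∑ i ∈ S, lam i = 1 := by
      rw [← hs1]
      apply Finset.sum_subset (Finset.subset_univ S)
      intro i _ hi
      by_contra hne
      exact hi (by simp [hS, lt_of_le_of_ne (hnn i) (Ne.symm hne)])
    have hx : x = ∑ i ∈ S, lam i • p i := by
      rw [Finset.sum_eq_add_sum_sdiff_singleton_of_mem hi₀S (fun i => lam i • p i)]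
      have hrest : ∑ i ∈ S \ {i₀}, lam i • p i = ∑ i ∈ S \ {i₀}, χ i := by
        apply Finset.sum_congr rfl
        intro i hi
        obtain ⟨hiS, hine⟩ := Finset.mem_sdiff.mp hi
        have hine' : i ≠ i₀ := by simpa using hine
        have hli : 0 < lam i := by simpa [hS] using hiS
        simp only [hp]
        simp only [if_neg hine']
        rw [smul_smul, mul_inv_cancel₀ (ne_of_gt hli), one_smul]
      rw [hrest]
      have hfirst : lam i₀ • p i₀ = χ i₀ + r := by
        simp only [hp]
        rw [if_pos trivial]
        rw [smul_add, smul_smul, smul_smul, mul_inv_cancel₀ (ne_of_gt hi₀), one_smul, one_smul]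
      rw [hfirst, hxs]
      have hsplit : ∑ i, χ i = ∑ i ∈ S, χ i + ∑ i ∈ Finset.univ \ S, χ i := by
        rw [← Finset.sum_sdiff (Finset.subset_univ S)]
        exact add_comm _ _
      rw [hsplit, ← hr,
        Finset.sum_eq_add_sum_sdiff_singleton_of_mem hi₀S (fun i => χ i)]
      abel
    rw [hx, ← Finset.centerMass_eq_of_sum_1 S p hsum]
    exact Finset.centerMass_mem_convexHull S (fun i hi => hnn i) (by rw [hsum]; norm_num)
      hpmem

section BalasEF

variable {n t : ℕ}

abbrev bIdx0 (ht : 1 ≤ t) : Fin t := ⟨0, ht⟩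

abbrev bKappa (n : ℕ) {t : ℕ} (ht : 1 ≤ t) (k : Fin t → ℕ) : Type :=
  ({i : Fin t // i ≠ bIdx0 ht} × Fin n) ⊕ ((Σ i : Fin t, Fin (k i)) ⊕ {i : Fin t // i ≠ bIdx0 ht})

abbrev bIota {t : ℕ} (m : Fin t → ℕ) : Type := (Σ i : Fin t, Fin (m i)) ⊕ Fin t

variable (ht : 1 ≤ t) (m k : Fin t → ℕ)

/-- extraction of the `υ i` block -/
noncomputable def bUps (i : Fin t) : (bKappa n ht k → ℝ) →ₗ[ℝ] (Fin (k i) → ℝ) :=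
  LinearMap.pi (fun j' => LinearMap.proj (Sum.inr (Sum.inl ⟨i, j'⟩)))

/-- linear part of `λ i` -/
noncomputable def bLamL (i : Fin t) : (bKappa n ht k → ℝ) →ₗ[ℝ] ℝ :=
  if h : i = bIdx0 ht then
    -(∑ i' : {i : Fin t // i ≠ bIdx0 ht},
      (LinearMap.proj (Sum.inr (Sum.inr i')) : (bKappa n ht k → ℝ) →ₗ[ℝ] ℝ))
  else LinearMap.proj (Sum.inr (Sum.inr ⟨i, h⟩))

/-- linear (in `y`) part of `χ i` -/
noncomputable def bChiL (i : Fin t) : (bKappa n ht k → ℝ) →ₗ[ℝ] (Fin n → ℝ) :=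
  if h : i = bIdx0 ht then
    -(∑ i' : {i : Fin t // i ≠ bIdx0 ht},
      LinearMap.pi (fun c => (LinearMap.proj (Sum.inl (i', c)) : (bKappa n ht k → ℝ) →ₗ[ℝ] ℝ)))
  else LinearMap.pi (fun c => LinearMap.proj (Sum.inl (⟨i, h⟩, c)))

def bInd (i : Fin t) : ℝ := if i = bIdx0 ht then 1 else 0

variable (A : ∀ i, Matrix (Fin (m i)) (Fin n) ℝ) (B : ∀ i, Matrix (Fin (m i)) (Fin (k i)) ℝ)
  (b : ∀ i, Fin (m i) → ℝ)

noncomputable def bF : bIota m → (Fin n → ℝ) →ₗ[ℝ] ℝ := fun idx =>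
  match idx with
  | .inl s => if s.1 = bIdx0 ht then LinearMap.proj s.2 ∘ₗ (A s.1).mulVecLin else 0
  | .inr _ => 0

noncomputable def bG : bIota m → (bKappa n ht k → ℝ) →ₗ[ℝ] ℝ := fun idx =>
  match idx with
  | .inl s => LinearMap.proj s.2 ∘ₗ (A s.1).mulVecLin ∘ₗ bChiL ht k s.1
      + LinearMap.proj s.2 ∘ₗ (B s.1).mulVecLin ∘ₗ bUps ht k s.1
      - b s.1 s.2 • bLamL ht k s.1
  | .inr i => -bLamL ht k i

noncomputable def bB : bIota m → ℝ := fun idx =>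
  match idx with
  | .inl s => bInd ht s.1 * b s.1 s.2
  | .inr i => bInd ht i

theorem balas_bridge :
    {x : Fin n → ℝ | ∃ y : bKappa n ht k → ℝ,
        ∀ idx, bF ht m A idx x + bG ht m k A B b idx y ≤ bB ht m b idx}
    = {x | ∃ (χ : Fin t → Fin n → ℝ) (υ : ∀ i, Fin (k i) → ℝ) (lam : Fin t → ℝ),
        (∀ i, 0 ≤ lam i) ∧ ∑ i, lam i = 1 ∧ x = ∑ i, χ i ∧
        ∀ i j, (A i).mulVec (χ i) j + (B i).mulVec (υ i) j ≤ lam i * b i j} := by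
  classical
  set i₀ : Fin t := bIdx0 ht with hi₀def
  have hmemiff : ∀ x : Fin t, x ∈ ({i₀}ᶜ : Finset (Fin t)) ↔ x ≠ i₀ := by
    intro x; simp
  -- apply lemmas
  have hlam_ne : ∀ (i : Fin t) (h : ¬ i = i₀) (y : bKappa n ht k → ℝ),
      bLamL ht k i y = y (Sum.inr (Sum.inr ⟨i, h⟩)) := by
    intro i h y; rw [bLamL, dif_neg h]; rfl
  have hlam_i0 : ∀ y : bKappa n ht k → ℝ,
      bLamL ht k i₀ y = -∑ i' : {i : Fin t // i ≠ i₀}, y (Sum.inr (Sum.inr i')) := by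
    intro y; rw [bLamL, dif_pos rfl]
    simp [LinearMap.sum_apply]
    convert rfl
  have hchi_ne : ∀ (i : Fin t) (h : ¬ i = i₀) (y : bKappa n ht k → ℝ),
      bChiL ht k i y = fun c => y (Sum.inl (⟨i, h⟩, c)) := by
    intro i h y; rw [bChiL, dif_neg h]; rfl
  have hchi_i0 : ∀ y : bKappa n ht k → ℝ,
      bChiL ht k i₀ y = -∑ i' : {i : Fin t // i ≠ i₀}, (fun c => y (Sum.inl (i', c))) := by
    intro y; rw [bChiL, dif_pos rfl]
    simp only [LinearMap.neg_apply, LinearMap.coe_sum, Finset.sum_apply]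
    rfl

  have hups_apply : ∀ (i : Fin t) (y : bKappa n ht k → ℝ),
      bUps ht k i y = fun j' => y (Sum.inr (Sum.inl ⟨i, j'⟩)) := fun i y => rfl
  -- total sums of linear parts vanish
  have hsum_lam : ∀ y : bKappa n ht k → ℝ, ∑ i, bLamL ht k i y = 0 := by
    intro y
    rw [Fintype.sum_eq_add_sum_compl i₀ (fun i => bLamL ht k i y), hlam_i0 y]
    have : ∑ i ∈ ({i₀}ᶜ : Finset (Fin t)), bLamL ht k i y
        = ∑ i' : {i : Fin t // i ≠ i₀}, y (Sum.inr (Sum.inr i')) := by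
      rw [Finset.sum_subtype ({i₀}ᶜ : Finset (Fin t)) hmemiff (fun i => bLamL ht k i y)]
      refine Finset.sum_congr rfl fun i' _ => ?_
      rw [hlam_ne i'.1 i'.2 y]
    rw [this]; ring
  have hsum_chi : ∀ y : bKappa n ht k → ℝ, ∑ i, bChiL ht k i y = 0 := by
    intro y
    rw [Fintype.sum_eq_add_sum_compl i₀ (fun i => bChiL ht k i y), hchi_i0 y]
    have : ∑ i ∈ ({i₀}ᶜ : Finset (Fin t)), bChiL ht k i y
        = ∑ i' : {i : Fin t // i ≠ i₀}, (fun c => y (Sum.inl (i', c))) := by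
      rw [Finset.sum_subtype ({i₀}ᶜ : Finset (Fin t)) hmemiff (fun i => bChiL ht k i y)]
      refine Finset.sum_congr rfl fun i' _ => ?_
      rw [hchi_ne i'.1 i'.2 y]
    rw [this]
    abel
  ext x
  simp only [Set.mem_setOf_eq]
  constructor
  · rintro ⟨y, hy⟩
    refine ⟨fun i => (if i = i₀ then x else 0) + bChiL ht k i y,
      fun i => bUps ht k i y, fun i => bInd ht i + bLamL ht k i y, ?_, ?_, ?_, ?_⟩
    · intro i
      have h2 := hy (Sum.inr i)
      simp only [bF, bG, bB, LinearMap.zero_apply, LinearMap.neg_apply, zero_add] at h2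
      show 0 ≤ bInd ht i + bLamL ht k i y
      linarith
    · rw [Finset.sum_add_distrib, hsum_lam]
      simp [bInd, Finset.sum_ite_eq']
    · rw [Finset.sum_add_distrib, hsum_chi, add_zero]
      simp [Finset.sum_ite_eq']
    · intro i j
      have h2 := hy (Sum.inl ⟨i, j⟩)
      simp only [bF, bG, bB, LinearMap.add_apply, LinearMap.sub_apply, LinearMap.smul_apply,
        LinearMap.comp_apply, LinearMap.proj_apply, Matrix.mulVecLin_apply, smul_eq_mul] at h2
      rw [Matrix.mulVec_add]
      simp only [Pi.add_apply]
      by_cases h : i = i₀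
      · rw [if_pos h] at h2 ⊢
        simp only [LinearMap.comp_apply, LinearMap.proj_apply, Matrix.mulVecLin_apply,
          bInd, if_pos h] at h2
        rw [bInd, if_pos h]
        rw [if_pos (show i = bIdx0 ht from h)] at h2
        nlinarith [h2]
      · rw [if_neg h] at h2 ⊢
        simp only [LinearMap.zero_apply, bInd, if_neg h] at h2
        rw [bInd, if_neg h]
        rw [Matrix.mulVec_zero]
        simp only [Pi.zero_apply, zero_add]
        rw [if_neg (show ¬ i = bIdx0 ht from h)] at h2
        nlinarith [h2]
  · rintro ⟨χ, υ, lam, hnn, hs1, hxs, hcon⟩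
    refine ⟨Sum.elim (fun p => χ p.1.1 p.2)
      (Sum.elim (fun s => υ s.1 s.2) (fun i' => lam i'.1)), ?_⟩
    set y : bKappa n ht k → ℝ := Sum.elim (fun p => χ p.1.1 p.2)
      (Sum.elim (fun s => υ s.1 s.2) (fun i' => lam i'.1)) with hy
    have hups : ∀ i, bUps ht k i y = υ i := by
      intro i; rw [hups_apply]; rfl
    have hsub_lam : ∑ i' : {i : Fin t // i ≠ i₀}, lam i'.1 = 1 - lam i₀ := by
      have h3 := hs1
      rw [Fintype.sum_eq_add_sum_compl i₀ lam,
        Finset.sum_subtype ({i₀}ᶜ : Finset (Fin t)) hmemiff lam] at h3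
      linarith
    have hsub_chi : ∑ i' : {i : Fin t // i ≠ i₀}, χ i'.1 = ∑ i, χ i - χ i₀ := by
      rw [Fintype.sum_eq_add_sum_compl i₀ χ,
        Finset.sum_subtype ({i₀}ᶜ : Finset (Fin t)) hmemiff χ]
      abel
    have hlam : ∀ i, bLamL ht k i y = lam i - bInd ht i := by
      intro i
      by_cases h : i = i₀
      · subst h
        rw [hlam_i0]
        have : ∀ i' : {i : Fin t // i ≠ i₀}, y (Sum.inr (Sum.inr i')) = lam i'.1 :=
          fun i' => rfl
        rw [Finset.sum_congr rfl (fun i' _ => this i'), hsub_lam, bInd, if_pos rfl]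
        ring
      · rw [hlam_ne i h, bInd, if_neg h]
        simp [hy]
    have hchi : ∀ i, bChiL ht k i y = χ i - (if i = i₀ then x else 0) := by
      intro i
      by_cases h : i = i₀
      · subst h
        rw [hchi_i0]
        have : ∀ i' : {i : Fin t // i ≠ i₀}, (fun c => y (Sum.inl (i', c))) = χ i'.1 :=
          fun i' => rfl
        rw [Finset.sum_congr rfl (fun i' _ => this i'), hsub_chi, ← hxs, if_pos rfl]
        abel
      · rw [hchi_ne i h, if_neg h]
        funext c
        simp [hy]
    rintro (⟨i, j⟩ | i)
    · simp only [bF, bG, bB, LinearMap.add_apply, LinearMap.sub_apply, LinearMap.smul_apply,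
        LinearMap.comp_apply, LinearMap.proj_apply, Matrix.mulVecLin_apply, smul_eq_mul]
      rw [hchi, hups, hlam]
      have h4 := hcon i j
      by_cases h : i = i₀
      · rw [if_pos h, if_pos h]
        simp only [LinearMap.comp_apply, LinearMap.proj_apply, Matrix.mulVecLin_apply]
        rw [Matrix.mulVec_sub]
        simp only [Pi.sub_apply]
        rw [bInd, if_pos h]
        nlinarith [h4]
      · rw [if_neg h, if_neg h]
        simp only [LinearMap.zero_apply]
        rw [Matrix.mulVec_sub]
        simp only [Pi.sub_apply]
        rw [Matrix.mulVec_zero]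
        rw [bInd, if_neg h]
        simp only [Pi.zero_apply, zero_add]
        nlinarith [h4]
    · simp only [bF, bG, bB, LinearMap.zero_apply, LinearMap.neg_apply, zero_add]
      rw [hlam]
      have h5 := hnn i
      by_cases h : i = i₀
      · subst h; rw [bInd]; rw [if_pos rfl]; linarith
      · rw [bInd]; rw [if_neg h]; linarith

end BalasEF

/-- Balas' theorem: for polyhedra `P₁, …, P_t` with identical recession cones,
`conv(P₁ ∪ ⋯ ∪ P_t)` is a polyhedron with
`xc ≤ ∑ xc(Pᵢ) + t`. -/
theorem balas_union {n t : ℕ} (ht : 1 ≤ t) (P : Fin t → Set (Fin n → ℝ))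
    (hpoly : ∀ i, IsPolyhedron (P i))
    (hrec : ∀ i j, recCone (P i) = recCone (P j)) :
    IsPolyhedron (convexHull ℝ (⋃ i, P i)) ∧
    xc (convexHull ℝ (⋃ i, P i)) ≤ (∑ i, xc (P i)) + t := by
  classical
  have hEF : ∀ i, IsEF (P i) (xc (P i)) := fun i => isEF_xc (hpoly i)
  choose k A B b hP using hEF
  have hcore := balas_core P (fun i => xc (P i)) k A B b hP hrec
  have hbridge := balas_bridge ht (fun i => xc (P i)) k A B b
  have hconv : convexHull ℝ (⋃ i, P i)
      = {x : Fin n → ℝ | ∃ y : bKappa n ht k → ℝ,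
          ∀ idx, bF ht (fun i => xc (P i)) A idx x
            + bG ht (fun i => xc (P i)) k A B b idx y ≤ bB ht (fun i => xc (P i)) b idx} := by
    rw [hcore, ← hbridge]
  constructor
  · rw [hconv]
    obtain ⟨ι', _, f', b', heq⟩ := elim_vars (Fintype.card (bKappa n ht k)) (bKappa n ht k) rfl
      (bF ht (fun i => xc (P i)) A) (bG ht (fun i => xc (P i)) k A B b)
      (bB ht (fun i => xc (P i)) b)
    rw [heq]
    exact isPolyhedron_of_rows f' b'
  · rw [hconv]
    have hEF2 := isEF_of_rows (bF ht (fun i => xc (P i)) A)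
      (bG ht (fun i => xc (P i)) k A B b) (bB ht (fun i => xc (P i)) b)
    have hcard : Fintype.card (bIota (fun i => xc (P i))) = (∑ i, xc (P i)) + t := by
      simp [bIota, Fintype.card_sigma]
    rw [hcard] at hEF2
    exact xc_le_of_isEF hEF2
end

section
/- Let G be a graph and suppose x* is an optimal solution to the fractional stable set LP max{ w(x) : x(v)+x(u) ≤ 1 for all edges uv, 0 ≤ x ≤ 1 } with 0 < x*(v) < 1 for all v. Then w, viewed as a vector in ℝ^V, is a nonnegative combination of the rows of the edge-node incidence matrix M; equivalently, w is edge-induced. -/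
open Finset


private def dotp {V : Type*} [Fintype V] (x y : V → ℝ) : ℝ := ∑ v, x v * y v

private lemma dotp_sub_smul_left {V : Type*} [Fintype V] (x y d : V → ℝ) (r : ℝ) :
    dotp (x - r • y) d = dotp x d - r * dotp y d := by
  simp [dotp, sub_mul, Finset.sum_sub_distrib, Finset.mul_sum, mul_assoc]

private lemma dotp_sub_smul_right {V : Type*} [Fintype V] (x y d : V → ℝ) (r : ℝ) :
    dotp x (d - r • y) = dotp x d - r * dotp x y := by
  simp [dotp, mul_sub, Finset.sum_sub_distrib, Finset.mul_sum]
  congr 1; ext v; ring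

private lemma farkas_aux {V : Type*} [Fintype V] :
    ∀ (n : ℕ) (f : Fin n → V → ℝ) (w : V → ℝ),
      (∀ d : V → ℝ, (∀ i, dotp (f i) d ≤ 0) → dotp w d ≤ 0) →
      ∃ t : Fin n → ℝ, (∀ i, 0 ≤ t i) ∧ w = ∑ i, t i • f i := by
  intro n
  induction n with
  | zero =>
    intro f w h
    have hww : dotp w w ≤ 0 := h w (fun i => i.elim0)
    have hw0 : w = 0 := by
      funext v
      have hnn : ∀ u ∈ Finset.univ, 0 ≤ w u * w u := fun u _ => mul_self_nonneg _
      have hz : ∑ u, w u * w u = 0 :=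
        le_antisymm hww (Finset.sum_nonneg hnn)
      have := (Finset.sum_eq_zero_iff_of_nonneg hnn).mp hz v (Finset.mem_univ v)
      exact mul_self_eq_zero.mp this
    exact ⟨fun i => 0, fun i => le_rfl, by simp [hw0]⟩
  | succ n ih =>
    intro f w h
    set a := f 0 with ha
    by_cases hc : ∀ d : V → ℝ, (∀ i : Fin n, dotp (f i.succ) d ≤ 0) → dotp w d ≤ 0
    · obtain ⟨t, ht, hw⟩ := ih (fun i => f i.succ) w hc
      refine ⟨Fin.cons 0 t, ?_, ?_⟩
      · intro i
        refine Fin.cases ?_ ?_ i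
        · simp
        · intro j; simpa using ht j
      · rw [Fin.sum_univ_succ]; simpa using hw
    · push_neg at hc
      obtain ⟨d0, hd0l, hd0w⟩ := hc
      have haq : 0 < dotp a d0 := by
        by_contra hq
        push_neg at hq
        have : dotp w d0 ≤ 0 := by
          refine h d0 (fun i => ?_)
          refine Fin.cases ?_ ?_ i
          · exact hq
          · intro j; exact hd0l j
        linarith
      set q := dotp a d0 with hqdef
      have hq0 : q ≠ 0 := ne_of_gt haq
      set g : Fin n → V → ℝ := fun i => f i.succ - (dotp (f i.succ) d0 / q) • a with hg
      set w' : V → ℝ := w - (dotp w d0 / q) • a with hw'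
      have hyp' : ∀ d : V → ℝ, (∀ i, dotp (g i) d ≤ 0) → dotp w' d ≤ 0 := by
        intro d hd
        set d' : V → ℝ := d - (dotp a d / q) • d0 with hd'
        have key : ∀ x : V → ℝ, dotp (x - (dotp x d0 / q) • a) d = dotp x d' := by
          intro x
          rw [dotp_sub_smul_left, hd', dotp_sub_smul_right]
          field_simp
        have hda : dotp a d' = 0 := by
          rw [hd', dotp_sub_smul_right]
          field_simp
          rw [hqdef]; ring
        have hwd' : dotp w d' ≤ 0 := by
          refine h d' (fun i => ?_)
          refine Fin.cases ?_ ?_ i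
          · exact le_of_eq hda
          · intro j
            have hj := hd j
            have : dotp (g j) d = dotp (f j.succ) d' := key (f j.succ)
            linarith
        rw [hw', key w]
        exact hwd'
      obtain ⟨t, ht, hwt⟩ := ih g w' hyp'
      set α : ℝ := dotp w d0 / q with hα
      have hα0 : 0 < α := div_pos hd0w haq
      set μ : Fin n → ℝ := fun i => dotp (f i.succ) d0 / q with hμ
      have hμ0 : ∀ i, μ i ≤ 0 := fun i =>
        div_nonpos_of_nonpos_of_nonneg (hd0l i) (le_of_lt haq)
      refine ⟨Fin.cons (α - ∑ i, t i * μ i) t, ?_, ?_⟩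
      · intro i
        refine Fin.cases ?_ ?_ i
        · have hsum : ∑ i, t i * μ i ≤ 0 :=
            Finset.sum_nonpos (fun i _ => mul_nonpos_of_nonneg_of_nonpos (ht i) (hμ0 i))
          simp only [Fin.cons_zero]
          linarith
        · intro j; simpa using ht j
      · rw [Fin.sum_univ_succ]
        simp only [Fin.cons_zero, Fin.cons_succ]
        have : w = w' + α • a := by rw [hw', hα]; abel
        rw [this, hwt]
        rw [hg]
        have expand : ∑ i : Fin n, t i • (f i.succ - (dotp (f i.succ) d0 / q) • a)
            = ∑ i : Fin n, t i • f i.succ - (∑ i, t i * μ i) • a := by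
          rw [Finset.sum_smul]
          rw [← Finset.sum_sub_distrib]
          congr 1; ext i
          rw [smul_sub, smul_smul, hμ]
        rw [expand]
        module

/-- If `x*` is an optimal solution of the fractional stable set LP with
`0 < x*(v) < 1` for every node `v`, then `w` is a nonnegative combination of the
rows of the edge-node incidence matrix, i.e. `w` is edge-induced. -/
theorem interior_optimum_implies_edge_induced {V : Type*} [Fintype V]
    (G : SimpleGraph V) (w : V → ℝ) (xs : V → ℝ)
    (hfeas : ∀ v u : V, G.Adj v u → xs v + xs u ≤ 1)
    (hint : ∀ v, 0 < xs v ∧ xs v < 1)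
    (hopt : ∀ x : V → ℝ, (∀ v, 0 ≤ x v ∧ x v ≤ 1) →
      (∀ v u : V, G.Adj v u → x v + x u ≤ 1) →
      ∑ v, w v * x v ≤ ∑ v, w v * xs v) :
    ∃ c : V → V → ℝ, (∀ u v, 0 ≤ c u v) ∧ (∀ u v, c u v = c v u) ∧
      (∀ u v, ¬ G.Adj u v → c u v = 0) ∧ ∀ v, w v = ∑ u, c v u := by
  classical
  set L : List (V × V) := (Finset.univ.filter (fun p : V × V => G.Adj p.1 p.2)).toList with hLdef
  have hLadj : ∀ p ∈ L, G.Adj p.1 p.2 := by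
    intro p hp
    rw [hLdef, Finset.mem_toList, Finset.mem_filter] at hp
    exact hp.2
  have hLmem : ∀ u v, G.Adj u v → (u, v) ∈ L := by
    intro u v huv
    rw [hLdef, Finset.mem_toList, Finset.mem_filter]
    exact ⟨Finset.mem_univ _, huv⟩
  set row : V × V → V → ℝ := fun p x => (if x = p.1 then (1:ℝ) else 0) + (if x = p.2 then 1 else 0)
    with hrow
  have hrowdot : ∀ (p : V × V) (d : V → ℝ), dotp (row p) d = d p.1 + d p.2 := by
    intro p d
    simp [dotp, hrow, add_mul, Finset.sum_add_distrib, ite_mul, Finset.sum_ite_eq']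
  set n := L.length with hn
  set f : Fin n → V → ℝ := fun i => row (L.get i) with hf
  have hyp : ∀ d : V → ℝ, (∀ i, dotp (f i) d ≤ 0) → dotp w d ≤ 0 := by
    intro d hd
    have hedge : ∀ u v, G.Adj u v → d u + d v ≤ 0 := by
      intro u v huv
      obtain ⟨i, hi⟩ := List.get_of_mem (hLmem u v huv)
      have hdi := hd i
      rw [hf] at hdi
      simp only at hdi
      rw [hi, hrowdot] at hdi
      exact hdi
    by_contra hpos
    push_neg at hpos
    have hne : (Finset.univ : Finset V).Nonempty := by
      rcases Finset.eq_empty_or_nonempty (Finset.univ : Finset V) with he | hne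
      · exfalso; rw [dotp, he, Finset.sum_empty] at hpos; linarith
      · exact hne
    set δ : V → ℝ := fun v => min (xs v) (1 - xs v) / (|d v| + 1) with hδ
    set ε : ℝ := Finset.univ.inf' hne δ with hε
    have hδpos : ∀ v, 0 < δ v := by
      intro v
      have h1 := (hint v).1
      have h2 := (hint v).2
      have : 0 < min (xs v) (1 - xs v) := lt_min h1 (by linarith)
      exact div_pos this (by positivity)
    have hε0 : 0 < ε := by
      rw [hε, Finset.lt_inf'_iff]
      exact fun v _ => hδpos v
    have hεδ : ∀ v, ε ≤ δ v := fun v => Finset.inf'_le _ (Finset.mem_univ v)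
    have hbound : ∀ v, ε * (|d v| + 1) ≤ min (xs v) (1 - xs v) := by
      intro v
      have hv := hεδ v
      rw [hδ] at hv
      simp only at hv
      rw [le_div_iff₀ (by positivity)] at hv
      exact hv
    have hfeas' : ∀ v, 0 ≤ xs v + ε * d v ∧ xs v + ε * d v ≤ 1 := by
      intro v
      have h1 := (hint v).1
      have h2 := (hint v).2
      have hb := hbound v
      have hm1 : min (xs v) (1 - xs v) ≤ xs v := min_le_left _ _
      have hm2 : min (xs v) (1 - xs v) ≤ 1 - xs v := min_le_right _ _
      have ha1 : d v ≤ |d v| := le_abs_self _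
      have ha2 : -|d v| ≤ d v := neg_abs_le _
      have ha0 : 0 ≤ |d v| := abs_nonneg _
      constructor
      · nlinarith
      · nlinarith
    have hedge' : ∀ v u, G.Adj v u → (xs v + ε * d v) + (xs u + ε * d u) ≤ 1 := by
      intro v u hvu
      have h1 := hfeas v u hvu
      have h2 := hedge v u hvu
      nlinarith
    have hle := hopt (fun v => xs v + ε * d v) hfeas' hedge'
    simp only [mul_add, Finset.sum_add_distrib] at hle
    have hsum : ∑ v, w v * (ε * d v) ≤ 0 := by linarith
    have heq : ∑ v, w v * (ε * d v) = ε * dotp w d := by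
      rw [dotp, Finset.mul_sum]
      congr 1; ext v; ring
    rw [heq] at hsum
    nlinarith
  obtain ⟨t, ht, hwt⟩ := farkas_aux n f w hyp
  refine ⟨fun u v => ∑ i, t i * ((if L.get i = (u, v) then 1 else 0)
      + (if L.get i = (v, u) then 1 else 0)), ?_, ?_, ?_, ?_⟩
  · intro u v
    refine Finset.sum_nonneg (fun i _ => ?_)
    have hnn : (0:ℝ) ≤ (if L.get i = (u, v) then (1:ℝ) else 0)
        + (if L.get i = (v, u) then 1 else 0) := by positivity
    exact mul_nonneg (ht i) hnn
  · intro u v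
    refine Finset.sum_congr rfl (fun i _ => by ring)
  · intro u v huv
    refine Finset.sum_eq_zero (fun i _ => ?_)
    have h1 : L.get i ≠ (u, v) := by
      intro he
      have hadj := hLadj (L.get i) (L.get_mem _)
      rw [he] at hadj
      exact huv hadj
    have h2 : L.get i ≠ (v, u) := by
      intro he
      have hadj := hLadj (L.get i) (L.get_mem _)
      rw [he] at hadj
      exact huv hadj.symm
    rw [if_neg h1, if_neg h2]
    ring
  · intro v
    have key1 : ∀ (p : V × V) (x : V),
        ∑ u, (if p = (x, u) then (1:ℝ) else 0) = if p.1 = x then 1 else 0 := by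
      intro p x
      have h : ∀ u, (if p = (x, u) then (1:ℝ) else 0)
          = if p.2 = u then (if p.1 = x then (1:ℝ) else 0) else 0 := by
        intro u
        rcases p with ⟨p1, p2⟩
        by_cases h1 : p1 = x <;> by_cases h2 : p2 = u <;> simp [Prod.ext_iff, h1, h2]
      rw [Finset.sum_congr rfl (fun u _ => h u)]
      simp
    have key2 : ∀ (p : V × V) (x : V),
        ∑ u, (if p = (u, x) then (1:ℝ) else 0) = if p.2 = x then 1 else 0 := by
      intro p x
      have h : ∀ u, (if p = (u, x) then (1:ℝ) else 0)
          = if p.1 = u then (if p.2 = x then (1:ℝ) else 0) else 0 := by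
        intro u
        rcases p with ⟨p1, p2⟩
        by_cases h1 : p1 = u <;> by_cases h2 : p2 = x <;> simp [Prod.ext_iff, h1, h2]
      rw [Finset.sum_congr rfl (fun u _ => h u)]
      simp
    have hwv : w v = ∑ i, t i * f i v := by
      conv_lhs => rw [hwt]
      simp [Finset.sum_apply]
    rw [hwv, Finset.sum_comm]
    refine Finset.sum_congr rfl (fun i _ => ?_)
    rw [← Finset.mul_sum]
    congr 1
    rw [Finset.sum_add_distrib, key1 (L.get i) v, key2 (L.get i) v]
    rw [hf]
    simp only [hrow]
    by_cases h1 : (L.get i).1 = v <;> by_cases h2 : (L.get i).2 = v <;>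
      simp [h1, h2, eq_comm]
end
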